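/- Let 𝔊₉ be the 7-dimensional real Lie algebra with basis (X₁,X₂,X₃,X₄,X₅,X,Y) and nonzero brackets [X₁,X₂]=X₄, [X₁,X₃]=X₅, [X,X₃]=X₃, [X,X₅]=X₅, [Y,X₂]=X₂, [Y,X₄]=X₄, [Y,X₃]=X₅. Let F ∈ 𝔊₉* have coordinates (α₁,α₂,α₃,α₄,α₅,α,β) with α₄α₅ ≠ 0. Then Ω_F(𝔊₉) = { (x₁*,x₂*,x₃*,x₄*,x₅*,x*,y*) ∈ 𝔊₉* : x₂*/x₄* − x₃*/x₅* + ln|x₄*| = α₂/α₄ − α₃/α₅ + ln|α₄|, α₄x₄* > 0, α₅x₅* > 0 } (here x₁*, x*, y* range over all of ℝ). -/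

import Mathlib

noncomputable section

/-- Half of the structure constants of the Lie algebra 𝔊₉ (indices `0,…,4` are
`X₁,…,X₅`, index `5` is `X`, index `6` is `Y`). -/
def g9half (i j : Fin 7) : Fin 7 → ℝ :=
  if i = 0 ∧ j = 1 then Pi.single 3 1      -- [X₁,X₂] = X₄
  else if i = 0 ∧ j = 2 then Pi.single 4 1 -- [X₁,X₃] = X₅
  else if i = 5 ∧ j = 2 then Pi.single 2 1 -- [X,X₃] = X₃
  else if i = 5 ∧ j = 4 then Pi.single 4 1 -- [X,X₅] = X₅
  else if i = 6 ∧ j = 1 then Pi.single 1 1 -- [Y,X₂] = X₂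
  else if i = 6 ∧ j = 3 then Pi.single 3 1 -- [Y,X₄] = X₄
  else if i = 6 ∧ j = 2 then Pi.single 4 1 -- [Y,X₃] = X₅
  else 0

/-- The bracket `[Xᵢ, Xⱼ]` (in coordinates) of basis vectors of 𝔊₉. -/
def g9br (i j : Fin 7) : Fin 7 → ℝ := g9half i j - g9half j i

/-- The matrix (in the given basis) of the adjoint endomorphism `ad_U : T ↦ [U,T]`
of 𝔊₉, where `u` is the coordinate vector of `U`. -/
def adG9 (u : Fin 7 → ℝ) : Matrix (Fin 7) (Fin 7) ℝ :=
  Matrix.of fun k j => ∑ i, u i * g9br i j k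

/-- `Ω_F(𝔊₉) = {F_U : U ∈ 𝔊₉}` where `⟨F_U,T⟩ = ⟨F, exp(ad_U)(T)⟩`; in coordinates
(dual basis), `F_U = α ᵥ* exp(ad_U)` where `α` is the coordinate vector of `F`. -/
def OmegaG9 (α : Fin 7 → ℝ) : Set (Fin 7 → ℝ) :=
  {g | ∃ u : Fin 7 → ℝ, g = Matrix.vecMul α (NormedSpace.exp (adG9 u))}

open NormedSpace

namespace G9aux

abbrev M7 := Matrix (Fin 7) (Fin 7) ℝ

def vmL (α : Fin 7 → ℝ) : M7 →ₗ[ℝ] (Fin 7 → ℝ) where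
  toFun A := Matrix.vecMul α A
  map_add' A B := by ext j; simp [Matrix.vecMul, dotProduct, Finset.sum_add_distrib, mul_add]
  map_smul' c A := by ext j; simp [Matrix.vecMul, dotProduct, Finset.mul_sum, mul_left_comm]

lemma vecMul_exp_eq (α : Fin 7 → ℝ) (M : M7) :
    Matrix.vecMul α (exp M) = ∑' n : ℕ, ((n.factorial : ℝ)⁻¹) • Matrix.vecMul α (M ^ n) := by
  letI : SeminormedRing M7 := Matrix.linftyOpSemiNormedRing
  letI : NormedRing M7 := Matrix.linftyOpNormedRing
  letI : NormedAlgebra ℝ M7 := Matrix.linftyOpNormedAlgebra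
  have hs : Summable (fun n : ℕ => ((n.factorial : ℝ)⁻¹) • M ^ n) := expSeries_summable' M
  have : Matrix.vecMul α (exp M) = (vmL α).toContinuousLinearMap (exp M) := rfl
  rw [this, exp_eq_tsum (𝕂 := ℝ), ContinuousLinearMap.map_tsum _ hs]
  simp [vmL]

lemma summable_vecMul_pow (α : Fin 7 → ℝ) (M : M7) :
    Summable (fun n : ℕ => ((n.factorial : ℝ)⁻¹) • Matrix.vecMul α (M ^ n)) := by
  letI : SeminormedRing M7 := Matrix.linftyOpSemiNormedRing
  letI : NormedRing M7 := Matrix.linftyOpNormedRing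
  letI : NormedAlgebra ℝ M7 := Matrix.linftyOpNormedAlgebra
  have hs : Summable (fun n : ℕ => ((n.factorial : ℝ)⁻¹) • M ^ n) := expSeries_summable' M
  have := hs.map (vmL α).toContinuousLinearMap.toLinearMap.toAddMonoidHom
    (vmL α).toContinuousLinearMap.continuous
  exact this.congr fun n => (vmL α).map_smul _ _

lemma vecMul_exp_apply (α : Fin 7 → ℝ) (M : M7) (j : Fin 7) :
    Matrix.vecMul α (exp M) j
      = ∑' n : ℕ, ((n.factorial : ℝ)⁻¹) * Matrix.vecMul α (M ^ n) j := by
  rw [vecMul_exp_eq, tsum_apply (summable_vecMul_pow α M)]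
  rfl

lemma summable_vecMul_pow_apply (α : Fin 7 → ℝ) (M : M7) (j : Fin 7) :
    Summable (fun n : ℕ => ((n.factorial : ℝ)⁻¹) * Matrix.vecMul α (M ^ n) j) := by
  have := (summable_vecMul_pow α M).map
    (ContinuousLinearMap.proj (R := ℝ) (φ := fun _ : Fin 7 => ℝ) j).toLinearMap.toAddMonoidHom
    (ContinuousLinearMap.proj (R := ℝ) (φ := fun _ : Fin 7 => ℝ) j).continuous
  refine this.congr fun n => ?_
  simp

set_option maxHeartbeats 3000000 in
lemma vecMul_adG9 (u v : Fin 7 → ℝ) (j : Fin 7) :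
    Matrix.vecMul v (adG9 u) j =
      if j = 0 then -(u 1 * v 3) - u 2 * v 4
      else if j = 1 then u 6 * v 1 + u 0 * v 3
      else if j = 2 then u 5 * v 2 + (u 0 + u 6) * v 4
      else if j = 3 then u 6 * v 3
      else if j = 4 then u 5 * v 4
      else if j = 5 then -(u 2 * v 2) - u 4 * v 4
      else -(u 1 * v 1) - u 3 * v 3 - u 2 * v 4 := by
  fin_cases j <;>
    · simp (config := {decide := true}) [adG9, g9br, g9half, Matrix.vecMul, dotProduct,
        Fin.sum_univ_seven, Pi.single_apply]
      try ring

set_option maxHeartbeats 3000000 in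
lemma vecMul_pow_adG9 (α u : Fin 7 → ℝ) (n : ℕ) (j : Fin 7) :
    Matrix.vecMul α ((adG9 u) ^ (n + 1)) j =
      if j = 0 then -(u 1 * α 3) * u 6 ^ n - (u 2 * α 4) * u 5 ^ n
      else if j = 1 then α 1 * u 6 ^ (n+1) + ((n:ℝ)+1) * (u 0 * α 3) * u 6 ^ n
      else if j = 2 then α 2 * u 5 ^ (n+1) + ((n:ℝ)+1) * ((u 0 + u 6) * α 4) * u 5 ^ n
      else if j = 3 then α 3 * u 6 ^ (n+1)
      else if j = 4 then α 4 * u 5 ^ (n+1)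
      else if j = 5 then -(u 2 * α 2 + u 4 * α 4) * u 5 ^ n
        - (n:ℝ) * (u 2 * (u 0 + u 6) * α 4) * u 5 ^ (n-1)
      else -(u 1 * α 1 + u 3 * α 3) * u 6 ^ n - (n:ℝ) * (u 1 * u 0 * α 3) * u 6 ^ (n-1)
        - (u 2 * α 4) * u 5 ^ n := by
  induction n generalizing j with
  | zero =>
    rw [pow_one, vecMul_adG9]
    fin_cases j <;> simp (config := {decide := true}) <;> ring
  | succ n ih =>
    rw [pow_succ, ← Matrix.vecMul_vecMul, vecMul_adG9]
    have h1 := ih 1; have h2 := ih 2; have h3 := ih 3; have h4 := ih 4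
    simp (config := {decide := true}) only [] at h1 h2 h3 h4
    rw [h1, h2, h3, h4]
    fin_cases j <;>
      · simp (config := {decide := true}) only [Nat.add_sub_cancel, Nat.cast_add, Nat.cast_one]
        push_cast
        ring

lemma exp_tsum (x : ℝ) : ∑' n : ℕ, x ^ n / (n.factorial : ℝ) = Real.exp x := by
  rw [Real.exp_eq_exp_ℝ, exp_eq_tsum_div]

lemma sum_exp (x : ℝ) : Summable fun n : ℕ => x ^ n / (n.factorial : ℝ) :=
  expSeries_div_summable x

lemma sum_exp' (x : ℝ) : Summable fun n : ℕ => x ^ (n+1) / ((n+1).factorial : ℝ) :=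
  ((summable_nat_add_iff 1).2 (sum_exp x) : _)

lemma exp_tsum' (x : ℝ) :
    ∑' n : ℕ, x ^ (n+1) / ((n+1).factorial : ℝ) = Real.exp x - 1 := by
  have h := Summable.tsum_eq_zero_add (sum_exp x)
  rw [exp_tsum x] at h
  simp only [pow_zero, Nat.factorial_zero, Nat.cast_one, div_one] at h
  linarith

def phiG (x : ℝ) : ℝ := ∑' n : ℕ, x ^ n / ((n+1).factorial : ℝ)

def psiG (x : ℝ) : ℝ := ∑' n : ℕ, (n : ℝ) * x ^ (n-1) / ((n+1).factorial : ℝ)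

lemma sum_phi (x : ℝ) : Summable fun n : ℕ => x ^ n / ((n+1).factorial : ℝ) := by
  apply Summable.of_abs
  apply Summable.of_nonneg_of_le (fun n => abs_nonneg _) (fun n => ?_) (sum_exp |x|)
  rw [abs_div, abs_pow, Nat.abs_cast]
  apply div_le_div_of_nonneg_left (by positivity) (Nat.cast_pos.2 n.factorial_pos)
  exact_mod_cast Nat.factorial_le (Nat.le_succ n)

lemma sum_nmul (x : ℝ) :
    Summable fun n : ℕ => (n : ℝ) * x ^ (n-1) / ((n+1).factorial : ℝ) := by
  set c := max |x| 1 with hc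
  have hc1 : (1:ℝ) ≤ c := le_max_right _ _
  have hxc : |x| ≤ c := le_max_left _ _
  apply Summable.of_abs
  apply Summable.of_nonneg_of_le (fun n => abs_nonneg _) (fun n => ?_) (sum_exp c)
  rw [abs_div, abs_mul, abs_pow, Nat.abs_cast, Nat.abs_cast]
  have h1 : |x| ^ (n-1) ≤ c ^ n := by
    calc |x| ^ (n-1) ≤ c ^ (n-1) := pow_le_pow_left₀ (abs_nonneg x) hxc _
    _ ≤ c ^ n := pow_le_pow_right₀ hc1 (Nat.sub_le n 1)
  have h2 : ((n+1).factorial : ℝ) = (n+1) * n.factorial := by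
    rw [Nat.factorial_succ]; push_cast; ring
  rw [h2, div_le_div_iff₀ (by positivity) (Nat.cast_pos.2 n.factorial_pos)]
  calc (n:ℝ) * |x| ^ (n-1) * n.factorial ≤ ((n:ℝ)+1) * c ^ n * n.factorial := by
        apply mul_le_mul_of_nonneg_right _ (Nat.cast_nonneg _)
        exact mul_le_mul (by linarith) h1 (by positivity) (by linarith)
    _ = c ^ n * (((n:ℝ)+1) * n.factorial) := by ring

lemma mul_phi (x : ℝ) : x * phiG x = Real.exp x - 1 := by
  rw [phiG, ← tsum_mul_left, ← exp_tsum' x]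
  exact tsum_congr fun n => by rw [← mul_div_assoc, pow_succ']

lemma phi_pos (x : ℝ) : 0 < phiG x := by
  rcases lt_trichotomy x 0 with h | h | h
  · have := mul_phi x
    have he : Real.exp x - 1 < 0 := by
      have := Real.exp_lt_one_iff.mpr h; linarith
    nlinarith
  · subst h
    rw [phiG, tsum_eq_single 0 (by intro n hn; simp [zero_pow hn])]
    norm_num
  · have := mul_phi x
    have he : 0 < Real.exp x - 1 := by
      have := Real.one_lt_exp_iff.mpr h; linarith
    nlinarith

/-- The sum `∑_{n} (n+1) xⁿ/(n+1)! = ∑ xⁿ/n! = eˣ` in the form needed: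
each term `((n+1):ℝ) * xⁿ/(n+1)! = xⁿ/n!`. -/
lemma succ_fact_term (x : ℝ) (n : ℕ) :
    ((n:ℝ)+1) * x ^ n / ((n+1).factorial : ℝ) = x ^ n / (n.factorial : ℝ) := by
  have h2 : ((n+1).factorial : ℝ) = ((n:ℝ)+1) * n.factorial := by
    rw [Nat.factorial_succ]; push_cast; ring
  have hn : ((n:ℝ)+1) ≠ 0 := by positivity
  have hf : (n.factorial : ℝ) ≠ 0 := Nat.cast_ne_zero.2 n.factorial_ne_zero
  rw [h2, mul_div_mul_left _ _ hn]

end G9aux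

namespace G9aux

variable (α u : Fin 7 → ℝ)

lemma phiG_def (x : ℝ) : phiG x = ∑' n : ℕ, x ^ n / ((n+1).factorial : ℝ) := rfl
lemma psiG_def (x : ℝ) : psiG x = ∑' n : ℕ, (n : ℝ) * x ^ (n-1) / ((n+1).factorial : ℝ) := rfl

lemma expand (j : Fin 7) :
    Matrix.vecMul α (exp (adG9 u)) j
      = α j + ∑' n : ℕ, (((n+1).factorial : ℝ))⁻¹ * Matrix.vecMul α ((adG9 u) ^ (n+1)) j := by
  rw [vecMul_exp_apply, Summable.tsum_eq_zero_add (summable_vecMul_pow_apply α (adG9 u) j)]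
  simp [Matrix.vecMul_one]

lemma gf3 : Matrix.vecMul α (exp (adG9 u)) 3 = α 3 * Real.exp (u 6) := by
  rw [expand]
  have h : ∀ n:ℕ, (((n+1).factorial:ℝ))⁻¹ * Matrix.vecMul α ((adG9 u)^(n+1)) 3
      = α 3 * (u 6 ^ (n+1) / ((n+1).factorial : ℝ)) := by
    intro n; rw [vecMul_pow_adG9]
    simp (config := {decide := true}) only [if_true, if_false]
    ring
  rw [tsum_congr h, tsum_mul_left, exp_tsum']
  ring

lemma gf4 : Matrix.vecMul α (exp (adG9 u)) 4 = α 4 * Real.exp (u 5) := by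
  rw [expand]
  have h : ∀ n:ℕ, (((n+1).factorial:ℝ))⁻¹ * Matrix.vecMul α ((adG9 u)^(n+1)) 4
      = α 4 * (u 5 ^ (n+1) / ((n+1).factorial : ℝ)) := by
    intro n; rw [vecMul_pow_adG9]
    simp (config := {decide := true}) only [if_true, if_false]
    ring
  rw [tsum_congr h, tsum_mul_left, exp_tsum']
  ring

lemma gf1 : Matrix.vecMul α (exp (adG9 u)) 1
    = (α 1 + u 0 * α 3) * Real.exp (u 6) := by
  rw [expand]
  have h : ∀ n:ℕ, (((n+1).factorial:ℝ))⁻¹ * Matrix.vecMul α ((adG9 u)^(n+1)) 1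
      = α 1 * (u 6 ^ (n+1) / ((n+1).factorial : ℝ))
        + (u 0 * α 3) * (u 6 ^ n / (n.factorial : ℝ)) := by
    intro n; rw [vecMul_pow_adG9]
    simp (config := {decide := true}) only [if_true, if_false]
    rw [← succ_fact_term (u 6) n]
    ring
  rw [tsum_congr h, Summable.tsum_add ((sum_exp' (u 6)).mul_left _) ((sum_exp (u 6)).mul_left _),
    tsum_mul_left, tsum_mul_left, exp_tsum', exp_tsum]
  ring

lemma gf2 : Matrix.vecMul α (exp (adG9 u)) 2
    = (α 2 + (u 0 + u 6) * α 4) * Real.exp (u 5) := by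
  rw [expand]
  have h : ∀ n:ℕ, (((n+1).factorial:ℝ))⁻¹ * Matrix.vecMul α ((adG9 u)^(n+1)) 2
      = α 2 * (u 5 ^ (n+1) / ((n+1).factorial : ℝ))
        + ((u 0 + u 6) * α 4) * (u 5 ^ n / (n.factorial : ℝ)) := by
    intro n; rw [vecMul_pow_adG9]
    simp (config := {decide := true}) only [if_true, if_false]
    rw [← succ_fact_term (u 5) n]
    ring
  rw [tsum_congr h, Summable.tsum_add ((sum_exp' (u 5)).mul_left _) ((sum_exp (u 5)).mul_left _),
    tsum_mul_left, tsum_mul_left, exp_tsum', exp_tsum]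
  ring

lemma gf0 : Matrix.vecMul α (exp (adG9 u)) 0
    = α 0 - (u 1 * α 3) * phiG (u 6) - (u 2 * α 4) * phiG (u 5) := by
  rw [expand]
  have h : ∀ n:ℕ, (((n+1).factorial:ℝ))⁻¹ * Matrix.vecMul α ((adG9 u)^(n+1)) 0
      = (-(u 1 * α 3)) * (u 6 ^ n / ((n+1).factorial : ℝ))
        + (-(u 2 * α 4)) * (u 5 ^ n / ((n+1).factorial : ℝ)) := by
    intro n; rw [vecMul_pow_adG9]
    simp (config := {decide := true}) only [if_true, if_false]
    ring
  rw [tsum_congr h, Summable.tsum_add ((sum_phi (u 6)).mul_left _) ((sum_phi (u 5)).mul_left _),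
    tsum_mul_left, tsum_mul_left, ← phiG_def, ← phiG_def]
  ring

lemma gf5 : Matrix.vecMul α (exp (adG9 u)) 5
    = α 5 - (u 2 * α 2 + u 4 * α 4) * phiG (u 5)
      - (u 2 * (u 0 + u 6) * α 4) * psiG (u 5) := by
  rw [expand]
  have h : ∀ n:ℕ, (((n+1).factorial:ℝ))⁻¹ * Matrix.vecMul α ((adG9 u)^(n+1)) 5
      = (-(u 2 * α 2 + u 4 * α 4)) * (u 5 ^ n / ((n+1).factorial : ℝ))
        + (-(u 2 * (u 0 + u 6) * α 4)) * ((n:ℝ) * u 5 ^ (n-1) / ((n+1).factorial : ℝ)) := by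
    intro n; rw [vecMul_pow_adG9]
    simp (config := {decide := true}) only [if_true, if_false]
    ring
  rw [tsum_congr h, Summable.tsum_add ((sum_phi (u 5)).mul_left _) ((sum_nmul (u 5)).mul_left _),
    tsum_mul_left, tsum_mul_left, ← phiG_def, ← psiG_def]
  ring

lemma gf6 : Matrix.vecMul α (exp (adG9 u)) 6
    = α 6 - (u 1 * α 1 + u 3 * α 3) * phiG (u 6)
      - (u 1 * u 0 * α 3) * psiG (u 6) - (u 2 * α 4) * phiG (u 5) := by
  rw [expand]
  have h : ∀ n:ℕ, (((n+1).factorial:ℝ))⁻¹ * Matrix.vecMul α ((adG9 u)^(n+1)) 6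
      = ((-(u 1 * α 1 + u 3 * α 3)) * (u 6 ^ n / ((n+1).factorial : ℝ))
        + (-(u 1 * u 0 * α 3)) * ((n:ℝ) * u 6 ^ (n-1) / ((n+1).factorial : ℝ)))
        + (-(u 2 * α 4)) * (u 5 ^ n / ((n+1).factorial : ℝ)) := by
    intro n; rw [vecMul_pow_adG9]
    simp (config := {decide := true}) only [if_true, if_false]
    ring
  rw [tsum_congr h,
    Summable.tsum_add (((sum_phi (u 6)).mul_left _).add ((sum_nmul (u 6)).mul_left _))
      ((sum_phi (u 5)).mul_left _),
    Summable.tsum_add ((sum_phi (u 6)).mul_left _) ((sum_nmul (u 6)).mul_left _),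
    tsum_mul_left, tsum_mul_left, tsum_mul_left, ← phiG_def, ← phiG_def, ← psiG_def]
  ring

end G9aux

open G9aux

/-- If `F ∈ 𝔊₉*` has coordinates `(α₁,…,α₅,α,β)` with `α₄α₅ ≠ 0`, then
`Ω_F(𝔊₉) = {(x₁*,…,x₅*,x*,y*) : x₂*/x₄* − x₃*/x₅* + ln|x₄*| = α₂/α₄ − α₃/α₅ + ln|α₄|,
α₄x₄* > 0, α₅x₅* > 0}`. -/
theorem omega_G9_transcendental (α : Fin 7 → ℝ) (h45 : α 3 * α 4 ≠ 0) :
    OmegaG9 α = {g : Fin 7 → ℝ |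
      g 1 / g 3 - g 2 / g 4 + Real.log |g 3| =
        α 1 / α 3 - α 2 / α 4 + Real.log |α 3| ∧
      α 3 * g 3 > 0 ∧ α 4 * g 4 > 0} := by
  have hA : α 3 ≠ 0 := left_ne_zero_of_mul h45
  have hB : α 4 ≠ 0 := right_ne_zero_of_mul h45
  ext g
  simp only [OmegaG9, Set.mem_setOf_eq]
  constructor
  · rintro ⟨u, rfl⟩
    have hE : (0:ℝ) < Real.exp (u 6) := Real.exp_pos _
    have hF : (0:ℝ) < Real.exp (u 5) := Real.exp_pos _
    rw [gf1, gf2, gf3, gf4]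
    refine ⟨?_, ?_, ?_⟩
    · have e1 : (α 1 + u 0 * α 3) * Real.exp (u 6) / (α 3 * Real.exp (u 6))
          = α 1 / α 3 + u 0 := by field_simp
      have e2 : (α 2 + (u 0 + u 6) * α 4) * Real.exp (u 5) / (α 4 * Real.exp (u 5))
          = α 2 / α 4 + (u 0 + u 6) := by field_simp
      have e3 : Real.log |α 3 * Real.exp (u 6)| = Real.log |α 3| + u 6 := by
        rw [abs_mul, abs_of_pos hE, Real.log_mul (abs_ne_zero.2 hA) (ne_of_gt hE),
          Real.log_exp]
      rw [e1, e2, e3]; ring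
    · have : α 3 * (α 3 * Real.exp (u 6)) = (α 3 * α 3) * Real.exp (u 6) := by ring
      rw [this]; exact mul_pos (mul_self_pos.2 hA) hE
    · have : α 4 * (α 4 * Real.exp (u 5)) = (α 4 * α 4) * Real.exp (u 5) := by ring
      rw [this]; exact mul_pos (mul_self_pos.2 hB) hF
  · rintro ⟨hlog, h3, h4⟩
    have hg3 : g 3 ≠ 0 := by rintro h; rw [h] at h3; simp at h3
    have hg4 : g 4 ≠ 0 := by rintro h; rw [h] at h4; simp at h4
    have hd3 : 0 < g 3 / α 3 := by
      rcases mul_pos_iff.1 h3 with ⟨h, h'⟩ | ⟨h, h'⟩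
      · exact div_pos h' h
      · exact div_pos_of_neg_of_neg h' h
    have hd4 : 0 < g 4 / α 4 := by
      rcases mul_pos_iff.1 h4 with ⟨h, h'⟩ | ⟨h, h'⟩
      · exact div_pos h' h
      · exact div_pos_of_neg_of_neg h' h
    set b := Real.log (g 3 / α 3) with hbdef
    set a := Real.log (g 4 / α 4) with hadef
    have hEb : Real.exp b = g 3 / α 3 := Real.exp_log hd3
    have hEa : Real.exp a = g 4 / α 4 := Real.exp_log hd4
    set t := g 1 / g 3 - α 1 / α 3 with htdef
    have hphib : phiG b ≠ 0 := ne_of_gt (phi_pos b)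
    have hphia : phiG a ≠ 0 := ne_of_gt (phi_pos a)
    set s2 := (α 0 - g 0) / (α 3 * phiG b) with hs2def
    set q := (α 5 - g 5) / (α 4 * phiG a) with hqdef
    set p := ((α 6 - g 6) - s2 * α 1 * phiG b - s2 * t * α 3 * psiG b) / (α 3 * phiG b)
      with hpdef
    refine ⟨fun i => if i = 0 then t else if i = 1 then s2 else if i = 2 then 0
      else if i = 3 then p else if i = 4 then q else if i = 5 then a else b, ?_⟩
    set u : Fin 7 → ℝ := fun i => if i = 0 then t else if i = 1 then s2 else if i = 2 then 0
      else if i = 3 then p else if i = 4 then q else if i = 5 then a else b with hudef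
    have hu0 : u 0 = t := rfl
    have hu1 : u 1 = s2 := rfl
    have hu2 : u 2 = 0 := rfl
    have hu3 : u 3 = p := rfl
    have hu4 : u 4 = q := rfl
    have hu5 : u 5 = a := rfl
    have hu6 : u 6 = b := rfl
    -- key consequence of the invariant equation
    have hb' : b = Real.log |g 3| - Real.log |α 3| := by
      rw [hbdef, ← Real.log_abs, abs_div,
        Real.log_div (abs_ne_zero.2 hg3) (abs_ne_zero.2 hA)]
    have hg2 : g 2 / g 4 = t + b + α 2 / α 4 := by
      rw [hb', htdef]; linarith
    funext j
    fin_cases j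
    · show g 0 = Matrix.vecMul α (exp (adG9 u)) 0
      rw [gf0, hu1, hu2, hu6]
      rw [hs2def]
      field_simp
      ring
    · show g 1 = Matrix.vecMul α (exp (adG9 u)) 1
      rw [gf1, hu0, hu6, hEb, htdef]
      field_simp
      ring
    · show g 2 = Matrix.vecMul α (exp (adG9 u)) 2
      rw [gf2, hu0, hu5, hu6, hEa]
      have : g 2 = (t + b + α 2 / α 4) * g 4 := by
        rw [← hg2]; field_simp
      rw [this]
      field_simp
      ring_nf
    · show g 3 = Matrix.vecMul α (exp (adG9 u)) 3
      rw [gf3, hu6, hEb]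
      field_simp
    · show g 4 = Matrix.vecMul α (exp (adG9 u)) 4
      rw [gf4, hu5, hEa]
      field_simp
    · show g 5 = Matrix.vecMul α (exp (adG9 u)) 5
      rw [gf5, hu2, hu4, hu5]
      rw [hqdef]
      field_simp
      ring
    · show g 6 = Matrix.vecMul α (exp (adG9 u)) 6
      rw [gf6, hu1, hu2, hu3, hu0, hu6]
      rw [hpdef]
      field_simp
      ring

end
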